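/- Let h be a (2-dimensional) Hadamard matrix of order v, i.e. a v×v matrix with entries in {-1,1} whose rows are pairwise orthogonal (equivalently h·hᵀ = v·I). For n ≥ 2 define the n-dimensional matrix H of order v by H(i₁,…,iₙ) = ∏_{1 ≤ j < k ≤ n} h(i_j, i_k). Then H is an n-dimensional Hadamard matrix: for every coordinate position j ∈ {1,…,n} and all indices a, b ∈ {1,…,v}, one has ∑ H(i₁,…,a,…,iₙ)·H(i₁,…,b,…,iₙ) = v^{n-1}·δ_{ab}, where the sum runs over all choices of the remaining n-1 indices i₁,…,î_j,…,iₙ ∈ {1,…,v} and a, b occupy position j. -/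
import Mathlib


open Finset

lemma col_orth (v : ℕ) (h : Fin v → Fin v → ℤ)
    (hrow : ∀ a b : Fin v, ∑ y : Fin v, h a y * h b y = if a = b then (v : ℤ) else 0) :
    ∀ a b : Fin v, ∑ x : Fin v, h x a * h x b = if a = b then (v : ℤ) else 0 := by
  intro a b
  have hv : (v : ℚ) ≠ 0 := by
    have : 0 < v := a.pos
    exact_mod_cast this.ne'
  set A : Matrix (Fin v) (Fin v) ℚ := Matrix.of (fun i j => (h i j : ℚ)) with hA
  have h1 : A * A.transpose = (v : ℚ) • 1 := by
    ext i k
    have := hrow i k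
    simp only [Matrix.mul_apply, Matrix.transpose_apply, Matrix.smul_apply, Matrix.one_apply,
      hA, Matrix.of_apply, smul_eq_mul]
    rw [show (∑ y, (h i y : ℚ) * (h k y : ℚ)) = ((∑ y, h i y * h k y : ℤ) : ℚ) by push_cast; rfl,
      this]
    split <;> simp
  have hinv : A * ((v : ℚ)⁻¹ • A.transpose) = 1 := by
    rw [Matrix.mul_smul, h1, smul_smul, inv_mul_cancel₀ hv, one_smul]
  have h2' := mul_eq_one_comm.mp hinv
  rw [Matrix.smul_mul] at h2'
  have h2 : A.transpose * A = (v : ℚ) • 1 := by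
    have := congrArg (fun M => (v : ℚ) • M) h2'
    simpa [smul_smul, mul_inv_cancel₀ hv] using this
  have hq : ((∑ x, h x a * h x b : ℤ) : ℚ) = ((if a = b then (v : ℤ) else 0 : ℤ) : ℚ) := by
    have := congrFun (congrFun h2 a) b
    simp only [Matrix.mul_apply, Matrix.transpose_apply, Matrix.smul_apply, Matrix.one_apply,
      hA, Matrix.of_apply, smul_eq_mul] at this
    rw [show ((∑ x, h x a * h x b : ℤ) : ℚ) = ∑ x, (h x a : ℚ) * (h x b : ℚ) by push_cast; rfl,
      this]
    split <;> simp
  exact Int.cast_injective hq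

/-- Product construction: from a 2-dimensional Hadamard matrix `h` of order `v`
(a `v × v` matrix with entries in `{-1,1}` and pairwise orthogonal rows), the
`n`-dimensional matrix `H(i₁,…,iₙ) = ∏_{j<k} h(i_j, i_k)` is an `n`-dimensional
Hadamard matrix: for every coordinate position `j` and all `a b`, the sum over
the remaining `n-1` coordinates of `H(…,a,…)·H(…,b,…)` equals `v^(n-1)·δ_{ab}`. -/
theorem product_construction_is_hadamard (v n : ℕ) (hn : 2 ≤ n)
    (h : Fin v → Fin v → ℤ)
    (hpm : ∀ i j, h i j = 1 ∨ h i j = -1)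
    (hrow : ∀ a b : Fin v, ∑ y : Fin v, h a y * h b y = if a = b then (v : ℤ) else 0)
    (H : (Fin n → Fin v) → ℤ)
    (hH : ∀ i : Fin n → Fin v,
      H i = ∏ p ∈ Finset.univ.filter (fun p : Fin n × Fin n => p.1 < p.2),
        h (i p.1) (i p.2)) :
    ∀ j : Fin n, ∀ a b : Fin v,
      ∑ g : {k : Fin n // k ≠ j} → Fin v,
        H (fun k => if hk : k = j then a else g ⟨k, hk⟩) *
        H (fun k => if hk : k = j then b else g ⟨k, hk⟩)
      = if a = b then (v : ℤ) ^ (n - 1) else 0 := by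
  intro j a b
  classical
  set T : Fin n → Fin v → ℤ :=
    fun k x => if j < k then h a x * h b x else h x a * h x b with hT
  have key : ∀ g : {k : Fin n // k ≠ j} → Fin v,
      H (fun k => if hk : k = j then a else g ⟨k, hk⟩) *
      H (fun k => if hk : k = j then b else g ⟨k, hk⟩)
      = ∏ k : {k : Fin n // k ≠ j}, T k.1 (g k) := by
    intro g
    set ia : Fin n → Fin v := fun k => if hk : k = j then a else g ⟨k, hk⟩ with hia
    set ib : Fin n → Fin v := fun k => if hk : k = j then b else g ⟨k, hk⟩ with hib
    rw [hH, hH, ← Finset.prod_mul_distrib]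
    rw [← Finset.prod_filter_mul_prod_filter_not
      (Finset.univ.filter (fun p : Fin n × Fin n => p.1 < p.2))
      (fun p : Fin n × Fin n => p.1 = j ∨ p.2 = j)]
    have hone : ∏ p ∈ (Finset.univ.filter (fun p : Fin n × Fin n => p.1 < p.2)).filter
        (fun p => ¬(p.1 = j ∨ p.2 = j)),
        h (ia p.1) (ia p.2) * h (ib p.1) (ib p.2) = 1 := by
      apply Finset.prod_eq_one
      intro p hp
      simp only [Finset.mem_filter, Finset.mem_univ, true_and, not_or] at hp
      obtain ⟨-, h1j, h2j⟩ := hp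
      have e1 : ia p.1 = ib p.1 := by simp [hia, hib, dif_neg h1j]
      have e2 : ia p.2 = ib p.2 := by simp [hia, hib, dif_neg h2j]
      rw [← e1, ← e2]
      rcases hpm (ia p.1) (ia p.2) with w | w <;> rw [w] <;> norm_num
    rw [hone, mul_one]
    have hnt : Nontrivial (Fin n) := Fin.nontrivial_iff_two_le.mpr hn
    obtain ⟨k0, hk0⟩ := exists_ne j
    refine Finset.prod_nbij'
      (fun k : {k : Fin n // k ≠ j} => if j < k.1 then (j, k.1) else (k.1, j))
      (fun p : Fin n × Fin n =>
        if hp : p.1 = j then (if hq : p.2 = j then ⟨k0, hk0⟩ else ⟨p.2, hq⟩) else ⟨p.1, hp⟩)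
      ?_ ?_ ?_ ?_ ?_ |>.symm
    · intro k _
      rcases lt_or_gt_of_ne k.2 with hlt | hgt
      · simp [if_neg (not_lt.mpr hlt.le), hlt]
      · simp [if_pos hgt, hgt]
    · intro p _
      exact Finset.mem_univ _
    · intro k _
      rcases lt_or_gt_of_ne k.2 with hlt | hgt
      · simp [if_neg (not_lt.mpr hlt.le), hlt.ne, k.2]
      · simp [if_pos hgt, hgt.ne', k.2]
    · intro p hp
      simp only [Finset.mem_filter, Finset.mem_univ, true_and] at hp
      obtain ⟨hlt, hj⟩ := hp
      rcases hj with h1 | h2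
      · have h2j : p.2 ≠ j := by rw [← h1]; exact hlt.ne'
        simp [h1, dif_neg h2j, if_pos (h1 ▸ hlt), Prod.ext_iff]
      · have h1j : p.1 ≠ j := by rw [← h2]; exact hlt.ne
        simp [dif_neg h1j, if_neg (not_lt.mpr (h2 ▸ hlt).le), Prod.ext_iff, h2]
    · intro k _
      rcases lt_or_gt_of_ne k.2 with hlt | hgt
      · simp only [hT, if_neg (not_lt.mpr hlt.le)]
        simp [hia, hib, k.2, hlt.ne]
      · simp only [hT, if_pos hgt]
        simp [hia, hib, k.2, hgt.ne']
  rw [Finset.sum_congr rfl (fun g _ => key g)]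
  rw [← Fintype.prod_sum (fun (k : {k : Fin n // k ≠ j}) (x : Fin v) => T k.1 x)]
  have hfac : ∀ k : {k : Fin n // k ≠ j}, ∑ x : Fin v, T k.1 x
      = if a = b then (v : ℤ) else 0 := by
    intro k
    by_cases hjk : j < k.1
    · simp only [hT, if_pos hjk]
      exact hrow a b
    · simp only [hT, if_neg hjk]
      exact col_orth v h hrow a b
  rw [Finset.prod_congr rfl (fun k _ => hfac k)]
  have hcard : Fintype.card {k : Fin n // k ≠ j} = n - 1 := by
    simp [Fintype.card_subtype_compl, Fintype.card_subtype_eq]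
  rw [Finset.prod_const, Finset.card_univ, hcard]
  split
  · rfl
  · exact zero_pow (by omega)
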